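/- Let H be a separable Hilbert space, (μ_i)_{i∈I} positive reals with orthonormal vectors (u_i)_{i∈I} in H spanning a closed subspace K, and C = Σ_i μ_i ⟨·,u_i⟩ u_i. Let 𝒴 be a separable Hilbert space and F ∈ S₂(H, 𝒴). For 0 ≤ γ ≤ 1 define the γ-seminorm ‖F‖_γ² := Σ_{i∈I} μ_i^{1−γ} ‖F u_i‖²_𝒴. Then ‖F‖_γ ≤ ‖F C^{(1−γ)/2}‖_{S₂(H,𝒴)}, with equality if γ < 1 or if F vanishes on K^⊥. -/

import Mathlib

open scoped RealInnerProductSpace ENNReal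


open ContinuousLinearMap in
private lemma aux_toReal_tsum_ofReal {α : Type*} (f : α → ℝ) (hf : ∀ a, 0 ≤ f a) :
    (∑' a, ENNReal.ofReal (f a)).toReal = ∑' a, f a := by
  rw [ENNReal.tsum_toReal_eq (fun a => ENNReal.ofReal_ne_top)]
  exact tsum_congr fun a => ENNReal.toReal_ofReal (hf a)

private lemma aux_parseval {E : Type*} [NormedAddCommGroup E] [InnerProductSpace ℝ E]
    {β : Type*} (c : HilbertBasis β ℝ E) (y : E) :
    ∑' j, ENNReal.ofReal (⟪c j, y⟫ ^ 2) = ENNReal.ofReal (‖y‖ ^ 2) := by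
  have h : HasSum (fun j => ⟪c j, y⟫ ^ 2) (‖y‖ ^ 2) := by
    have h2 := c.hasSum_inner_mul_inner y y
    rw [real_inner_self_eq_norm_sq] at h2
    convert h2 using 2 with j
    · rfl
    rw [sq, real_inner_comm]
  rw [← h.tsum_eq, ← ENNReal.ofReal_tsum_of_nonneg (fun j => sq_nonneg _) h.summable]

private lemma aux_bessel {E : Type*} [NormedAddCommGroup E] [InnerProductSpace ℝ E]
    [CompleteSpace E] {α : Type*} {v : α → E} (hv : Orthonormal ℝ v) (y : E) :
    (∑' a, ENNReal.ofReal (⟪v a, y⟫ ^ 2)) ≤ ENNReal.ofReal (‖y‖ ^ 2) ∧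
    ((∀ x : E, (∀ a, ⟪v a, x⟫ = 0) → ⟪y, x⟫ = 0) →
      (∑' a, ENNReal.ofReal (⟪v a, y⟫ ^ 2)) = ENNReal.ofReal (‖y‖ ^ 2)) := by
  obtain ⟨w, bw, hsw, hbw⟩ := hv.toSubtypeRange.exists_hilbertBasis_extension
  have hvinj : Function.Injective v := hv.linearIndependent.injective
  set e : α → w := fun a => (⟨v a, hsw ⟨a, rfl⟩⟩ : w) with he
  have heinj : Function.Injective e := by
    intro a a' h
    exact hvinj (congrArg Subtype.val h)
  set f : w → ℝ≥0∞ := fun x => ENNReal.ofReal (⟪(x : E), y⟫ ^ 2) with hf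
  have hfe : ∀ a, ENNReal.ofReal (⟪v a, y⟫ ^ 2) = f (e a) := fun a => rfl
  have hsum : ∑' x : w, f x = ENNReal.ofReal (‖y‖ ^ 2) := by
    have := aux_parseval bw y
    rw [hbw] at this
    exact this
  constructor
  · calc (∑' a, ENNReal.ofReal (⟪v a, y⟫ ^ 2)) = ∑' a, f (e a) := tsum_congr hfe
      _ ≤ ∑' x : w, f x := ENNReal.tsum_comp_le_tsum_of_injective heinj f
      _ = _ := hsum
  · intro hy
    have hsupp : Function.support f ⊆ Set.range e := by
      intro x hx
      by_contra hxe
      apply hx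
      have hxv : ∀ a, v a ≠ (x : E) := by
        intro a hax
        exact hxe ⟨a, Subtype.ext hax⟩
      have horto : ∀ a, ⟪v a, (x : E)⟫ = 0 := by
        intro a
        have h1 : (⟨v a, hsw ⟨a, rfl⟩⟩ : w) ≠ x := fun h => hxv a (congrArg Subtype.val h)
        have := bw.orthonormal.2 h1
        rwa [hbw] at this
      have := hy (x : E) horto
      rw [real_inner_comm] at this
      simp [hf, this]
    calc (∑' a, ENNReal.ofReal (⟪v a, y⟫ ^ 2)) = ∑' a, f (e a) := tsum_congr hfe
      _ = ∑' x : w, f x := heinj.tsum_eq hsupp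
      _ = _ := hsum

open ContinuousLinearMap in
private lemma aux_double {H Y : Type*}
    [NormedAddCommGroup H] [InnerProductSpace ℝ H] [CompleteSpace H]
    [NormedAddCommGroup Y] [InnerProductSpace ℝ Y] [CompleteSpace Y]
    (T : H →L[ℝ] Y) {α β : Type*} (v : α → H) (c : HilbertBasis β ℝ Y) :
    ∑' a, ENNReal.ofReal (‖T (v a)‖ ^ 2)
      = ∑' j, ∑' a, ENNReal.ofReal (⟪v a, (adjoint T) (c j)⟫ ^ 2) := by
  rw [← ENNReal.tsum_comm]
  refine tsum_congr fun a => ?_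
  rw [← aux_parseval c (T (v a))]
  refine tsum_congr fun j => ?_
  rw [← adjoint_inner_left, real_inner_comm]

open ContinuousLinearMap in
private lemma aux_hs {H Y : Type*}
    [NormedAddCommGroup H] [InnerProductSpace ℝ H] [CompleteSpace H]
    [NormedAddCommGroup Y] [InnerProductSpace ℝ Y] [CompleteSpace Y]
    (T : H →L[ℝ] Y) {κ β : Type*} (b : HilbertBasis κ ℝ H) (c : HilbertBasis β ℝ Y) :
    ∑' k, ENNReal.ofReal (‖T (b k)‖ ^ 2)
      = ∑' j, ENNReal.ofReal (‖(adjoint T) (c j)‖ ^ 2) := by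
  rw [aux_double T b c]
  exact tsum_congr fun j => aux_parseval b _

/-- Norm-transfer lemma: with `C = Σ μ_i ⟨·,u_i⟩ u_i` and `S` the spectrally defined
fractional power `C^{(1-γ)/2}` (equal to the identity on `K^⊥` when `γ = 1`, zero on `K^⊥`
when `γ < 1`), the γ-seminorm `‖F‖_γ² = Σ μ_i^{1-γ} ‖F u_i‖²` of a Hilbert–Schmidt operator
`F : H → 𝒴` satisfies `‖F‖_γ ≤ ‖F ∘ S‖_{S₂}`, with equality if `γ < 1` or if `F` vanishes
on `K^⊥`. -/
theorem stmt16 {H Y ι κ : Type*}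
    [NormedAddCommGroup H] [InnerProductSpace ℝ H] [CompleteSpace H]
    [NormedAddCommGroup Y] [InnerProductSpace ℝ Y] [CompleteSpace Y]
    (u : ι → H) (hu : Orthonormal ℝ u)
    (μ : ι → ℝ) (hμ : ∀ i, 0 < μ i) (hμs : Summable μ)
    (C : H →L[ℝ] H) (hC : ∀ x : H, HasSum (fun i => (μ i * ⟪u i, x⟫) • u i) (C x))
    (γ : ℝ) (hγ0 : 0 ≤ γ) (hγ1 : γ ≤ 1)
    (S : H →L[ℝ] H)
    (hSu : ∀ i, S (u i) = ((μ i) ^ ((1 - γ) / 2)) • u i)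
    (hSperp : γ < 1 → ∀ x : H, (∀ i, ⟪u i, x⟫ = 0) → S x = 0)
    (hSid : γ = 1 → ∀ x : H, (∀ i, ⟪u i, x⟫ = 0) → S x = x)
    (b : HilbertBasis κ ℝ H) (F : H →L[ℝ] Y)
    (hFS : Summable fun k => ‖F (b k)‖ ^ 2) :
    (∑' i, (μ i) ^ (1 - γ) * ‖F (u i)‖ ^ 2) ≤ ∑' k, ‖F (S (b k))‖ ^ 2 ∧
    ((γ < 1 ∨ ∀ x : H, (∀ i, ⟪u i, x⟫ = 0) → F x = 0) →
      (∑' i, (μ i) ^ (1 - γ) * ‖F (u i)‖ ^ 2) = ∑' k, ‖F (S (b k))‖ ^ 2) := by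
  classical
  obtain ⟨w, c, hc⟩ := exists_hilbertBasis ℝ Y
  set T : H →L[ℝ] Y := F ∘L S with hT
  -- pointwise identity on the u_i
  have hterm : ∀ i, μ i ^ (1 - γ) * ‖F (u i)‖ ^ 2 = ‖T (u i)‖ ^ 2 := by
    intro i
    have : T (u i) = ((μ i) ^ ((1 - γ) / 2)) • F (u i) := by
      simp [hT, hSu i, map_smul]
    rw [this, norm_smul, mul_pow, Real.norm_eq_abs, sq_abs,
      ← Real.rpow_natCast ((μ i) ^ ((1 - γ) / 2)) 2,
      ← Real.rpow_mul (hμ i).le]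
    norm_num
  set L : ℝ≥0∞ := ∑' i, ENNReal.ofReal (‖T (u i)‖ ^ 2) with hL
  set G : ℝ≥0∞ := ∑' k, ENNReal.ofReal (‖T (b k)‖ ^ 2) with hG
  set G' : ℝ≥0∞ := ∑' j, ENNReal.ofReal (‖(ContinuousLinearMap.adjoint T) (c j)‖ ^ 2) with hG'
  have hGG' : G = G' := aux_hs T b c
  have hLsum : L = ∑' j, ∑' i,
      ENNReal.ofReal (⟪u i, (ContinuousLinearMap.adjoint T) (c j)⟫ ^ 2) :=
    aux_double T u c
  have hLG : L ≤ G := by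
    rw [hLsum, hGG']
    exact ENNReal.tsum_le_tsum fun j => (aux_bessel hu _).1
  -- finiteness of G
  have hGfin : G ≠ ∞ := by
    have hFfin : (∑' k, ENNReal.ofReal (‖F (b k)‖ ^ 2)) ≠ ∞ := by
      rw [← ENNReal.ofReal_tsum_of_nonneg (fun k => sq_nonneg _) hFS]
      exact ENNReal.ofReal_ne_top
    have hFeq : (∑' j, ENNReal.ofReal (‖(ContinuousLinearMap.adjoint F) (c j)‖ ^ 2))
        = ∑' k, ENNReal.ofReal (‖F (b k)‖ ^ 2) := (aux_hs F b c).symm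
    have hadj : ∀ j, (ContinuousLinearMap.adjoint T) (c j)
        = (ContinuousLinearMap.adjoint S) ((ContinuousLinearMap.adjoint F) (c j)) := by
      intro j
      rw [hT, ContinuousLinearMap.adjoint_comp]
      rfl
    have hbound : G' ≤ ENNReal.ofReal (‖ContinuousLinearMap.adjoint S‖ ^ 2)
        * ∑' j, ENNReal.ofReal (‖(ContinuousLinearMap.adjoint F) (c j)‖ ^ 2) := by
      rw [← ENNReal.tsum_mul_left]
      refine ENNReal.tsum_le_tsum fun j => ?_
      rw [hadj j, ← ENNReal.ofReal_mul (sq_nonneg _), ← mul_pow]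
      exact ENNReal.ofReal_le_ofReal
        (pow_le_pow_left₀ (norm_nonneg _) ((ContinuousLinearMap.adjoint S).le_opNorm _) 2)
    rw [hGG']
    refine ne_top_of_le_ne_top ?_ hbound
    rw [hFeq]
    exact ENNReal.mul_ne_top ENNReal.ofReal_ne_top hFfin
  -- real conversions
  have hlhs : (∑' i, (μ i) ^ (1 - γ) * ‖F (u i)‖ ^ 2) = L.toReal := by
    rw [hL, aux_toReal_tsum_ofReal _ (fun i => sq_nonneg _)]
    exact tsum_congr hterm
  have hrhs : (∑' k, ‖F (S (b k))‖ ^ 2) = G.toReal := by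
    rw [hG, aux_toReal_tsum_ofReal _ (fun k => sq_nonneg _)]
    exact tsum_congr fun k => rfl
  constructor
  · rw [hlhs, hrhs]
    exact ENNReal.toReal_mono hGfin hLG
  · intro hcond
    rw [hlhs, hrhs]
    congr 1
    rw [hLsum, hGG']
    refine tsum_congr fun j => (aux_bessel hu _).2 ?_
    intro x hx
    have hTx : T x = 0 := by
      rcases hcond with hγ | hF
      · rw [hT]; simp [hSperp hγ x hx]
      · rcases lt_or_eq_of_le hγ1 with hγ | hγ
        · rw [hT]; simp [hSperp hγ x hx]
        · rw [hT]
          simp only [ContinuousLinearMap.comp_apply, hSid hγ x hx]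
          exact hF x hx
    rw [← ContinuousLinearMap.adjoint_inner_right]
    simp [hTx]
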